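/- The integral of the K-Bessel function $\int_0^\infty K_{iR}(y) y^{s} \frac{dy}{y}$ equals $2^{s-2}\Gamma\left(\frac{s+iR}{2}\right)\Gamma\left(\frac{s-iR}{2}\right)$ for $\Re(s) > |\Im(R)|$ (in particular for real $R$ and $\Re(s)>0$). -/

import Mathlib

open MeasureTheory Set Complex

/-- The modified Bessel function of the second kind, defined by its
standard integral representation `K_ν(y) = ∫_0^∞ e^{-y cosh t} cosh(ν t) dt`. -/
noncomputable def besselK (ν : ℂ) (y : ℝ) : ℂ :=
  ∫ t in Set.Ioi (0 : ℝ), Complex.exp (-(y : ℂ) * Real.cosh t) * Complex.cosh (ν * t)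

/-! ### Auxiliary real-analysis lemmas -/

lemma exp_abs_le_two_cosh (t : ℝ) : Real.exp |t| ≤ 2 * Real.cosh t := by
  rw [Real.cosh_eq]
  rcases abs_cases t with ⟨h, _⟩ | ⟨h, _⟩ <;> rw [h] <;> nlinarith [Real.exp_pos t, Real.exp_pos (-t)]

lemma norm_cosh_le (w : ℂ) : ‖Complex.cosh w‖ ≤ Real.exp |w.re| := by
  have h : Complex.cosh w = (Complex.exp w + Complex.exp (-w)) / 2 := by
    rw [Complex.cosh, Complex.exp_neg]
  rw [h]
  calc ‖(Complex.exp w + Complex.exp (-w)) / 2‖ ≤ (‖Complex.exp w‖ + ‖Complex.exp (-w)‖)/2 := by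
        rw [norm_div, Complex.norm_two]
        gcongr; exact norm_add_le _ _
    _ ≤ Real.exp |w.re| := by
        simp only [Complex.norm_exp, Complex.neg_re]
        rcases abs_cases w.re with ⟨h1, h2⟩ | ⟨h1, h2⟩ <;> rw [h1]
        · have := Real.exp_le_exp.mpr (by linarith : -w.re ≤ w.re); linarith
        · have := Real.exp_le_exp.mpr (by linarith : w.re ≤ -w.re); linarith

lemma cosh_rpow_neg_le {t σ : ℝ} (hσ : 0 < σ) :
    Real.cosh t ^ (-σ) ≤ 2 ^ σ * Real.exp (-(σ * |t|)) := by
  have h1 : Real.exp |t| / 2 ≤ Real.cosh t := by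
    rw [div_le_iff₀ (by norm_num)]; linarith [exp_abs_le_two_cosh t]
  have h2 : (0:ℝ) < Real.exp |t| / 2 := by positivity
  calc Real.cosh t ^ (-σ) ≤ (Real.exp |t| / 2) ^ (-σ) :=
        Real.rpow_le_rpow_of_nonpos h2 h1 (by linarith)
    _ = 2 ^ σ * Real.exp (-(σ * |t|)) := by
        rw [Real.div_rpow (Real.exp_pos _).le (by norm_num), ← Real.exp_mul, div_eq_mul_inv,
          ← Real.rpow_neg (by norm_num), neg_neg, mul_comm]
        ring_nf

/-! ### Integrability lemmas -/

lemma intOn_rpow_exp {a r : ℝ} (ha : 0 < a) (hr : 0 < r) :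
    IntegrableOn (fun y : ℝ => y ^ (a-1) * Real.exp (-(r*y))) (Ioi 0) := by
  have h0 : IntegrableOn (fun y : ℝ => Real.exp (-(r*y)) * (r*y) ^ (a-1)) (Ioi 0) := by
    have := (integrableOn_Ioi_comp_mul_left_iff
      (fun x : ℝ => Real.exp (-x) * x ^ (a-1)) 0 hr).mpr
    simpa using this (by simpa using Real.GammaIntegral_convergent ha)
  have h1 : IntegrableOn (fun y : ℝ => r ^ ((1:ℝ)-a) * (Real.exp (-(r*y)) * (r*y) ^ (a-1))) (Ioi 0) :=
    h0.const_mul _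
  refine h1.congr_fun (fun y hy => ?_) measurableSet_Ioi
  rw [mem_Ioi] at hy
  have h2 : r ^ ((1:ℝ)-a) * r ^ (a-1) = 1 := by rw [← Real.rpow_add hr]; norm_num
  calc r ^ ((1:ℝ)-a) * (Real.exp (-(r*y)) * (r*y) ^ (a-1))
      = (r ^ ((1:ℝ)-a) * r ^ (a-1)) * (Real.exp (-(r*y)) * y ^ (a-1)) := by
        rw [Real.mul_rpow hr.le hy.le]; ring
    _ = y ^ (a-1) * Real.exp (-(r*y)) := by rw [h2]; ring

lemma intOn_cpow_exp {s : ℂ} {r : ℝ} (hs : 0 < s.re) (hr : 0 < r) :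
    IntegrableOn (fun y : ℝ => (y:ℂ) ^ (s-1) * Complex.exp (-(r*y))) (Ioi 0) := by
  have h0 : IntegrableOn (fun y : ℝ => Complex.exp (-(r*y)) * ((r*y:ℝ):ℂ) ^ (s-1)) (Ioi 0) := by
    have := (integrableOn_Ioi_comp_mul_left_iff
      (fun x : ℝ => Complex.exp (-x) * (x:ℂ) ^ (s-1)) 0 hr).mpr
    have h2 := this (by simpa using Complex.GammaIntegral_convergent hs)
    simpa using h2
  have h1 : IntegrableOn (fun y : ℝ => (r:ℂ) ^ ((1:ℂ)-s) * (Complex.exp (-(r*y)) * ((r*y:ℝ):ℂ) ^ (s-1))) (Ioi 0) :=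
    h0.const_mul _
  refine h1.congr_fun (fun y hy => ?_) measurableSet_Ioi
  rw [mem_Ioi] at hy
  have h2 : (r:ℂ) ^ ((1:ℂ)-s) * (r:ℂ) ^ (s-1) = 1 := by
    rw [← Complex.cpow_add _ _ (by exact_mod_cast hr.ne')]; norm_num
  calc (r:ℂ) ^ ((1:ℂ)-s) * (Complex.exp (-(r*y)) * ((r*y:ℝ):ℂ) ^ (s-1))
      = ((r:ℂ) ^ ((1:ℂ)-s) * (r:ℂ) ^ (s-1)) * (Complex.exp (-(r*y)) * (y:ℂ) ^ (s-1)) := by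
        rw [Complex.ofReal_mul, mul_cpow_ofReal_nonneg hr.le hy.le]; ring
    _ = (y:ℂ) ^ (s-1) * Complex.exp (-(r*y)) := by rw [h2]; ring

lemma integrableOn_Iic_of_neg' {E : Type*} [NormedAddCommGroup E] {f : ℝ → E}
    (h : IntegrableOn (fun x => f (-x)) (Ici 0)) : IntegrableOn f (Iic (0:ℝ)) := by
  rw [IntegrableOn, ← Measure.map_neg_eq_self (volume : Measure ℝ)]
  have m : MeasurableEmbedding fun x : ℝ => -x := (Homeomorph.neg ℝ).measurableEmbedding
  rw [m.restrict_map, m.integrable_map_iff]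
  simpa [Function.comp_def, neg_preimage, neg_Iic, neg_zero, IntegrableOn] using h

lemma exp_abs_int {b : ℝ} (hb : 0 < b) : Integrable (fun t : ℝ => Real.exp (-(b*|t|))) := by
  rw [← integrableOn_univ, ← Iic_union_Ioi (a := (0:ℝ))]
  have base : IntegrableOn (fun x : ℝ => Real.exp (-b * x)) (Ici 0) :=
    Iff.mpr integrableOn_Ici_iff_integrableOn_Ioi (exp_neg_integrableOn_Ioi 0 hb)
  refine IntegrableOn.union ?_ ?_
  · apply integrableOn_Iic_of_neg'
    refine base.congr_fun (fun x hx => ?_) measurableSet_Ici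
    simp [abs_neg, _root_.abs_of_nonneg (mem_Ici.mp hx), neg_mul]
  · refine (base.congr_fun (fun x hx => ?_) measurableSet_Ici).mono_set Ioi_subset_Ici_self
    simp [_root_.abs_of_nonneg (mem_Ici.mp hx), neg_mul]

/-! ### The substitution `x = (1 + tanh t)/2` -/

noncomputable def phi (x : ℝ) : ℝ := (Real.log x - Real.log (1-x))/2
noncomputable def phi' (x : ℝ) : ℝ := (x⁻¹ + (1-x)⁻¹)/2

lemma phi_deriv {x : ℝ} (hx : x ∈ Ioo (0:ℝ) 1) :
    HasDerivWithinAt phi (phi' x) (Ioo 0 1) x := by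
  obtain ⟨hx0, hx1⟩ := hx
  have h1 : (0:ℝ) < 1 - x := by linarith
  have d1 : HasDerivAt Real.log x⁻¹ x := Real.hasDerivAt_log hx0.ne'
  have d2 : HasDerivAt (fun x : ℝ => Real.log (1-x)) (-(1-x)⁻¹) x := by
    have : HasDerivAt (fun x : ℝ => 1 - x) (-1) x := by
      simpa using (hasDerivAt_id x).const_sub (1:ℝ)
    have h3 := (Real.hasDerivAt_log h1.ne').comp x this
    rw [mul_neg_one] at h3
    exact h3
  have := ((d1.sub d2).div_const 2)
  have heq : (x⁻¹ - -(1-x)⁻¹)/2 = phi' x := by rw [phi']; ring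
  rw [heq] at this
  exact this.hasDerivWithinAt

noncomputable def psi (t : ℝ) : ℝ := 1/(1 + Real.exp (-(2*t)))

lemma psi_mem (t : ℝ) : psi t ∈ Ioo (0:ℝ) 1 := by
  have h := Real.exp_pos (-(2*t))
  constructor
  · rw [psi]; positivity
  · rw [psi, div_lt_one (by linarith)]; linarith

lemma one_sub_psi (t : ℝ) : 1 - psi t = Real.exp (-(2*t))/(1 + Real.exp (-(2*t))) := by
  have h := Real.exp_pos (-(2*t))
  rw [psi]; field_simp; ring

lemma phi_psi (t : ℝ) : phi (psi t) = t := by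
  have h := Real.exp_pos (-(2*t))
  have h1 : (0:ℝ) < 1 + Real.exp (-(2*t)) := by linarith
  have hψ := psi_mem t
  rw [phi, one_sub_psi, ← Real.log_div (ne_of_gt hψ.1) (ne_of_gt (by positivity))]
  have : psi t / (Real.exp (-(2*t))/(1 + Real.exp (-(2*t)))) = Real.exp (2*t) := by
    rw [psi, Real.exp_neg]
    have h2 := Real.exp_pos (2*t)
    field_simp
  rw [this, Real.log_exp]; ring

lemma phi_image : phi '' Ioo 0 1 = univ := by
  refine eq_univ_of_forall (fun t => ⟨psi t, psi_mem t, phi_psi t⟩)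

lemma phi_inj : InjOn phi (Ioo 0 1) := by
  intro a ha b hb h
  obtain ⟨ha0, ha1⟩ := ha; obtain ⟨hb0, hb1⟩ := hb
  have h1a : (0:ℝ) < 1 - a := by linarith
  have h1b : (0:ℝ) < 1 - b := by linarith
  have : Real.log (a/(1-a)) = Real.log (b/(1-b)) := by
    rw [Real.log_div ha0.ne' h1a.ne', Real.log_div hb0.ne' h1b.ne']
    rw [phi, phi] at h
    linarith
  have h2 : a/(1-a) = b/(1-b) := by
    have := congrArg Real.exp this
    rwa [Real.exp_log (by positivity), Real.exp_log (by positivity)] at this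
  field_simp at h2
  linarith

lemma exp_log_half {x : ℝ} (hx : 0 < x) : Real.exp (Real.log x / 2) = Real.sqrt x := by
  rw [Real.sqrt_eq_rpow, Real.rpow_def_of_pos hx, mul_one_div]

lemma cosh_phi {x : ℝ} (hx : x ∈ Ioo (0:ℝ) 1) :
    Real.cosh (phi x) = (2 * (Real.sqrt x * Real.sqrt (1-x)))⁻¹ := by
  obtain ⟨hx0, hx1⟩ := hx
  have h1x : (0:ℝ) < 1 - x := by linarith
  have ha := Real.sqrt_pos.mpr hx0
  have hb := Real.sqrt_pos.mpr h1x
  have ha2 : Real.sqrt x ^ 2 = x := Real.sq_sqrt hx0.le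
  have hb2 : Real.sqrt (1-x) ^ 2 = 1 - x := Real.sq_sqrt h1x.le
  have hexp : Real.exp (phi x) = Real.sqrt x / Real.sqrt (1-x) := by
    rw [phi, sub_div, Real.exp_sub, exp_log_half hx0, exp_log_half h1x]
  rw [Real.cosh_eq, hexp, Real.exp_neg, hexp]
  rw [inv_div]
  field_simp
  nlinarith

lemma sqrt_cpow {x : ℝ} (hx0 : 0 < x) (s : ℂ) : ((Real.sqrt x : ℝ):ℂ)^s = (x:ℂ)^(s/2) := by
  rw [Real.sqrt_eq_rpow, Complex.ofReal_cpow hx0.le]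
  have him : (Complex.log (x:ℂ) * (((1:ℝ)/2 : ℝ):ℂ)).im = 0 := by
    rw [← Complex.ofReal_log hx0.le, ← Complex.ofReal_mul]
    exact Complex.ofReal_im _
  have := (Complex.cpow_mul (x := (x:ℂ)) (y := (((1:ℝ)/2 : ℝ):ℂ)) s
    (by rw [him]; exact neg_lt_zero.mpr Real.pi_pos) (by rw [him]; exact Real.pi_pos.le)).symm
  rw [this, show ((((1:ℝ)/2 : ℝ):ℂ) * s) = s/2 by push_cast; ring]

lemma cosh_phi_cpow {x : ℝ} (hx : x ∈ Ioo (0:ℝ) 1) (s : ℂ) :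
    ((Real.cosh (phi x) : ℝ):ℂ)^(-s) = 2^s * (x:ℂ)^(s/2) * (((1-x:ℝ)):ℂ)^(s/2) := by
  obtain ⟨hx0, hx1⟩ := hx
  have h1x : (0:ℝ) < 1 - x := by linarith
  have ha := Real.sqrt_pos.mpr hx0
  have hb := Real.sqrt_pos.mpr h1x
  set r : ℝ := 2 * (Real.sqrt x * Real.sqrt (1-x)) with hrdef
  have hrpos : 0 < r := by positivity
  rw [cosh_phi ⟨hx0, hx1⟩]
  rw [Complex.ofReal_inv]
  have harg : ((r:ℝ):ℂ).arg ≠ Real.pi := by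
    rw [Complex.arg_ofReal_of_nonneg hrpos.le]
    exact (Real.pi_ne_zero).symm
  rw [Complex.inv_cpow _ _ harg, Complex.cpow_neg, inv_inv]
  rw [hrdef, Complex.ofReal_mul, mul_cpow_ofReal_nonneg (by norm_num) (by positivity),
    Complex.ofReal_mul, mul_cpow_ofReal_nonneg ha.le hb.le,
    sqrt_cpow hx0, sqrt_cpow h1x]
  norm_num [mul_assoc]

lemma exp_nu_phi {x : ℝ} (hx : x ∈ Ioo (0:ℝ) 1) (ν : ℂ) :
    Complex.exp (ν * (phi x : ℝ)) = (x:ℂ)^(ν/2) * (((1-x:ℝ)):ℂ)^(-(ν/2)) := by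
  obtain ⟨hx0, hx1⟩ := hx
  have h1x : (0:ℝ) < 1 - x := by linarith
  have hφ : ν * ((phi x : ℝ):ℂ)
      = (ν/2) * (Real.log x : ℂ) + (-(ν/2)) * (Real.log (1-x) : ℂ) := by
    rw [phi]; push_cast; ring
  rw [hφ, Complex.exp_add]
  congr 1
  · rw [Complex.cpow_def_of_ne_zero (by exact_mod_cast hx0.ne'), ← Complex.ofReal_log hx0.le,
      mul_comm]
  · rw [Complex.cpow_def_of_ne_zero (by exact_mod_cast h1x.ne'), ← Complex.ofReal_log h1x.le,
      mul_comm]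

lemma transform_eq (s ν : ℂ) {x : ℝ} (hx : x ∈ Ioo (0:ℝ) 1) :
    |phi' x| • (((Real.cosh (phi x) : ℝ):ℂ)^(-s) * Complex.exp (ν * (phi x : ℝ))) =
    2^(s-1) * (x:ℂ)^((s+ν)/2-1) * (((1-x:ℝ)):ℂ)^((s-ν)/2-1) := by
  obtain ⟨hx0, hx1⟩ := hx
  have h1x : (0:ℝ) < 1 - x := by linarith
  have hphi'pos : 0 < phi' x := by rw [phi']; positivity
  have hphi'eq : phi' x = (2*(x*(1-x)))⁻¹ := by rw [phi']; field_simp; ring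
  rw [cosh_phi_cpow ⟨hx0, hx1⟩, exp_nu_phi ⟨hx0, hx1⟩, abs_of_pos hphi'pos, hphi'eq]
  have hX : (x:ℂ) ≠ 0 := by exact_mod_cast hx0.ne'
  have hY : ((1-x:ℝ):ℂ) ≠ 0 := by exact_mod_cast h1x.ne'
  rw [real_smul]
  push_cast
  have e2 : (2:ℂ)^(s-1) = 2^s * 2⁻¹ := by
    rw [Complex.cpow_sub _ _ (two_ne_zero), Complex.cpow_one, div_eq_mul_inv]
  have eX : (x:ℂ)^((s+ν)/2-1) = (x:ℂ)^(s/2) * (x:ℂ)^(ν/2) * (x:ℂ)⁻¹ := by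
    rw [Complex.cpow_sub _ _ hX, Complex.cpow_one, show (s+ν)/2 = s/2 + ν/2 by ring,
      Complex.cpow_add _ _ hX, div_eq_mul_inv]
  have eY : ((1-x:ℝ):ℂ)^((s-ν)/2-1) = ((1-x:ℝ):ℂ)^(s/2) * ((1-x:ℝ):ℂ)^(-(ν/2)) * ((1-x:ℝ):ℂ)⁻¹ := by
    rw [Complex.cpow_sub _ _ hY, Complex.cpow_one, show (s-ν)/2 = s/2 + -(ν/2) by ring,
      Complex.cpow_add _ _ hY, div_eq_mul_inv]
  push_cast at eY
  rw [e2, eX, eY]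
  have h2 : (2:ℂ) ≠ 0 := two_ne_zero
  have hYc : (1:ℂ) - (x:ℂ) ≠ 0 := by push_cast at hY; exact hY
  field_simp

lemma subst_integral (s ν : ℂ) :
    (∫ t : ℝ, ((Real.cosh t : ℝ):ℂ)^(-s) * Complex.exp (ν * t))
      = 2^(s-1) * Complex.betaIntegral ((s+ν)/2) ((s-ν)/2) := by
  set g : ℝ → ℂ := fun t => ((Real.cosh t : ℝ):ℂ)^(-s) * Complex.exp (ν * t) with hg
  have h1 : (∫ t : ℝ, g t) = ∫ t in phi '' Ioo 0 1, g t := by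
    rw [phi_image, Measure.restrict_univ]
  rw [h1, integral_image_eq_integral_abs_deriv_smul measurableSet_Ioo
    (fun x hx => phi_deriv hx) phi_inj g]
  have h2 : ∀ x ∈ Ioo (0:ℝ) 1, |phi' x| • g (phi x)
      = 2^(s-1) * ((x:ℂ)^((s+ν)/2-1) * (1 - (x:ℂ))^((s-ν)/2-1)) := by
    intro x hx
    have := transform_eq s ν hx
    rw [hg]
    simp only []
    rw [this]
    push_cast
    ring
  rw [setIntegral_congr_fun measurableSet_Ioo h2, MeasureTheory.integral_const_mul]
  congr 1
  rw [Complex.betaIntegral, intervalIntegral.integral_of_le zero_le_one,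
    MeasureTheory.integral_Ioc_eq_integral_Ioo]

/-! ### Integrability of the full-line integrand and halving -/

lemma g_norm_bound (s ν : ℂ) (t : ℝ) (hσ : 0 < s.re) :
    ‖((Real.cosh t : ℝ):ℂ)^(-s) * Complex.exp (ν * t)‖
      ≤ 2^s.re * Real.exp (-((s.re - |ν.re|) * |t|)) := by
  rw [norm_mul,
    Complex.norm_cpow_eq_rpow_re_of_pos (Real.cosh_pos t), Complex.neg_re, Complex.norm_exp]
  have h1 : Real.cosh t ^ (-s.re) ≤ 2 ^ s.re * Real.exp (-(s.re * |t|)) := cosh_rpow_neg_le hσ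
  have h2 : Real.exp ((ν * (t:ℂ)).re) ≤ Real.exp (|ν.re| * |t|) := by
    apply Real.exp_le_exp.mpr
    have : (ν * (t:ℂ)).re = ν.re * t := by simp [Complex.mul_re]
    rw [this]
    calc ν.re * t ≤ |ν.re * t| := le_abs_self _
      _ = |ν.re| * |t| := abs_mul _ _
  calc Real.cosh t ^ (-s.re) * Real.exp ((ν * (t:ℂ)).re)
      ≤ (2 ^ s.re * Real.exp (-(s.re * |t|))) * Real.exp (|ν.re| * |t|) := by
        apply mul_le_mul h1 h2 (Real.exp_pos _).le (by positivity)
    _ = 2^s.re * Real.exp (-((s.re - |ν.re|) * |t|)) := by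
        rw [mul_assoc, ← Real.exp_add]; ring_nf

lemma g_integrable (s ν : ℂ) (h : |ν.re| < s.re) :
    Integrable (fun t : ℝ => ((Real.cosh t : ℝ):ℂ)^(-s) * Complex.exp (ν * t)) := by
  have hσ : 0 < s.re := lt_of_le_of_lt (abs_nonneg _) h
  have hcont : Continuous (fun t : ℝ => ((Real.cosh t : ℝ):ℂ)^(-s) * Complex.exp (ν * t)) := by
    apply Continuous.mul
    · apply continuous_iff_continuousAt.mpr; intro t
      exact (continuousAt_ofReal_cpow_const _ _ (Or.inr (Real.cosh_pos t).ne')).comp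
        Real.continuous_cosh.continuousAt
    · exact Complex.continuous_exp.comp (continuous_const.mul Complex.continuous_ofReal)
  refine Integrable.mono' (((exp_abs_int (b := s.re - |ν.re|) (by linarith)).const_mul
    (2^s.re))) hcont.aestronglyMeasurable ?_
  exact Filter.Eventually.of_forall (fun t => g_norm_bound s ν t hσ)

lemma halfline (s ν : ℂ) (h : |ν.re| < s.re) :
    (∫ t : ℝ, ((Real.cosh t : ℝ):ℂ)^(-s) * Complex.exp (ν * t))
      = 2 * ∫ t in Ioi (0:ℝ), ((Real.cosh t : ℝ):ℂ)^(-s) * Complex.cosh (ν * t) := by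
  set g : ℝ → ℂ := fun t => ((Real.cosh t : ℝ):ℂ)^(-s) * Complex.exp (ν * t) with hgdef
  have hg : Integrable g := g_integrable s ν h
  rw [← intervalIntegral.integral_Iic_add_Ioi (b := (0:ℝ)) hg.integrableOn hg.integrableOn]
  have hneg : (∫ t in Iic (0:ℝ), g t) = ∫ t in Ioi (0:ℝ), g (-t) := by
    have := integral_comp_neg_Ioi 0 g
    rw [neg_zero] at this
    exact this.symm
  rw [hneg, ← integral_add (hg.comp_neg.integrableOn) hg.integrableOn,
    ← MeasureTheory.integral_const_mul]
  apply setIntegral_congr_fun measurableSet_Ioi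
  intro t ht
  have hcosh : Complex.cosh (ν * t) = (Complex.exp (ν * t) + Complex.exp (-(ν * t)))/2 := by
    rw [Complex.cosh, Complex.exp_neg]
  simp only [hgdef]
  push_cast [Real.cosh_neg]
  rw [hcosh, mul_neg]
  ring

/-! ### Fubini -/

lemma F_integrable (s ν : ℂ) (h : |ν.re| < s.re) :
    Integrable (fun p : ℝ × ℝ =>
        Complex.exp (-(p.1:ℂ) * Real.cosh p.2) * Complex.cosh (ν * p.2) * (p.1:ℂ)^(s-1))
      ((volume.restrict (Ioi (0:ℝ))).prod (volume.restrict (Ioi (0:ℝ)))) := by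
  have hσ : 0 < s.re := lt_of_le_of_lt (abs_nonneg _) h
  set F : ℝ × ℝ → ℂ := fun p =>
    Complex.exp (-(p.1:ℂ) * Real.cosh p.2) * Complex.cosh (ν * p.2) * (p.1:ℂ)^(s-1) with hF
  have hmeas : AEStronglyMeasurable F
      ((volume.restrict (Ioi (0:ℝ))).prod (volume.restrict (Ioi (0:ℝ)))) := by
    rw [Measure.prod_restrict]
    apply ContinuousOn.aestronglyMeasurable ?_ (measurableSet_Ioi.prod measurableSet_Ioi)
    apply ContinuousOn.mul
    · apply Continuous.continuousOn
      apply Continuous.mul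
      · exact Complex.continuous_exp.comp
          (((Complex.continuous_ofReal.comp continuous_fst).neg).mul
            (Complex.continuous_ofReal.comp (Real.continuous_cosh.comp continuous_snd)))
      · exact Complex.continuous_cosh.comp
          (continuous_const.mul (Complex.continuous_ofReal.comp continuous_snd))
    · intro p hp
      exact ((continuousAt_ofReal_cpow_const p.1 (s-1)
        (Or.inr (ne_of_gt hp.1))).comp continuousAt_fst).continuousWithinAt
  rw [integrable_prod_iff' hmeas]
  constructor
  · filter_upwards [ae_restrict_mem measurableSet_Ioi] with t ht
    have hr : 0 < Real.cosh t := Real.cosh_pos t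
    have base : IntegrableOn (fun y : ℝ => Complex.cosh (ν*(t:ℂ)) *
        ((y:ℂ)^(s-1) * Complex.exp (-(Real.cosh t * y)))) (Ioi 0) :=
      (intOn_cpow_exp hσ hr).const_mul _
    have goal : IntegrableOn (fun y => F (y, t)) (Ioi 0) := by
      refine base.congr_fun (fun y hy => ?_) measurableSet_Ioi
      simp only [hF]
      push_cast
      ring_nf
    exact goal
  · have hb : 0 < s.re - |ν.re| := by linarith
    have hmaj : Integrable (fun t : ℝ => (2^s.re * Real.Gamma s.re) *
        Real.exp (-(s.re - |ν.re|) * t)) (volume.restrict (Ioi (0:ℝ))) :=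
      (exp_neg_integrableOn_Ioi 0 hb).const_mul _
    refine Integrable.mono' hmaj (hmeas.prod_swap.norm.integral_prod_right') ?_
    filter_upwards [ae_restrict_mem measurableSet_Ioi] with t ht
    have hr : 0 < Real.cosh t := Real.cosh_pos t
    have ht0 : (0:ℝ) < t := ht
    have hnonneg : 0 ≤ ∫ y in Ioi (0:ℝ), ‖F (y, t)‖ :=
      integral_nonneg (fun y => norm_nonneg _)
    rw [Real.norm_eq_abs, _root_.abs_of_nonneg hnonneg]
    have hbound : ∀ y ∈ Ioi (0:ℝ), ‖F (y, t)‖ ≤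
        Real.exp (|ν.re| * t) * (y ^ (s.re - 1) * Real.exp (-(Real.cosh t * y))) := by
      intro y hy
      have hy0 : (0:ℝ) < y := hy
      simp only [hF]
      rw [norm_mul, norm_mul,
        Complex.norm_exp, Complex.norm_cpow_eq_rpow_re_of_pos hy0]
      have e1 : (-(y:ℂ) * (Real.cosh t : ℂ)).re = -(Real.cosh t * y) := by
        simp [Complex.mul_re]; ring
      rw [e1, Complex.sub_re, Complex.one_re]
      have e2 : ‖Complex.cosh (ν * t)‖ ≤ Real.exp (|ν.re| * t) := by
        have := norm_cosh_le (ν * t)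
        refine this.trans (Real.exp_le_exp.mpr ?_)
        have : (ν * (t:ℂ)).re = ν.re * t := by simp [Complex.mul_re]
        rw [this, abs_mul, abs_of_pos ht0]
      calc Real.exp (-(Real.cosh t * y)) * ‖Complex.cosh (ν * ↑t)‖ * y ^ (s.re - 1)
          ≤ Real.exp (-(Real.cosh t * y)) * Real.exp (|ν.re| * t) * y ^ (s.re - 1) := by
            apply mul_le_mul_of_nonneg_right _ (by positivity)
            exact mul_le_mul_of_nonneg_left e2 (Real.exp_pos _).le
        _ = Real.exp (|ν.re| * t) * (y ^ (s.re - 1) * Real.exp (-(Real.cosh t * y))) := by ring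
    have hIeq : ∫ y in Ioi (0:ℝ),
        Real.exp (|ν.re| * t) * (y ^ (s.re - 1) * Real.exp (-(Real.cosh t * y)))
        = Real.exp (|ν.re| * t) * ((1/Real.cosh t) ^ s.re * Real.Gamma s.re) := by
      rw [MeasureTheory.integral_const_mul, Real.integral_rpow_mul_exp_neg_mul_Ioi hσ hr]
    have hle : (∫ y in Ioi (0:ℝ), ‖F (y, t)‖) ≤
        Real.exp (|ν.re| * t) * ((1/Real.cosh t) ^ s.re * Real.Gamma s.re) := by
      rw [← hIeq]
      refine integral_mono_of_nonneg (Filter.Eventually.of_forall (fun y => norm_nonneg _))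
        ((intOn_rpow_exp hσ hr).const_mul _) ?_
      filter_upwards [ae_restrict_mem measurableSet_Ioi] with y hy
      exact hbound y hy
    refine hle.trans ?_
    have h1r : (1/Real.cosh t) ^ s.re = Real.cosh t ^ (-s.re) := by
      rw [one_div, Real.inv_rpow hr.le, ← Real.rpow_neg hr.le]
    have h2 : Real.cosh t ^ (-s.re) ≤ 2 ^ s.re * Real.exp (-(s.re * |t|)) := cosh_rpow_neg_le hσ
    rw [h1r]
    have hΓ : 0 ≤ Real.Gamma s.re := Real.Gamma_pos_of_pos hσ |>.le
    calc Real.exp (|ν.re| * t) * (Real.cosh t ^ (-s.re) * Real.Gamma s.re)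
        ≤ Real.exp (|ν.re| * t) * ((2 ^ s.re * Real.exp (-(s.re * |t|))) * Real.Gamma s.re) := by
          apply mul_le_mul_of_nonneg_left _ (Real.exp_pos _).le
          exact mul_le_mul_of_nonneg_right h2 hΓ
      _ = 2^s.re * Real.Gamma s.re * Real.exp (-(s.re - |ν.re|) * t) := by
          rw [abs_of_pos ht0,
            show (-(s.re - |ν.re|) * t) = |ν.re| * t + -(s.re * t) by ring, Real.exp_add]
          ring

/-- The Mellin transform of `K_{iR}` equals `2^{s-2} Γ((s+iR)/2) Γ((s-iR)/2)`
for `Re(s) > |Im(R)|`. -/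
theorem mellin_besselK (R s : ℂ) (hs : |R.im| < s.re) :
    ∫ y in Set.Ioi (0 : ℝ), besselK (Complex.I * R) y * (y : ℂ) ^ (s - 1)
      = 2 ^ (s - 2) * Complex.Gamma ((s + Complex.I * R) / 2)
        * Complex.Gamma ((s - Complex.I * R) / 2) := by
  set ν : ℂ := Complex.I * R with hν
  have hνre : ν.re = -R.im := by simp [hν, Complex.mul_re]
  have h : |ν.re| < s.re := by rw [hνre, abs_neg]; exact hs
  have hσ : 0 < s.re := lt_of_le_of_lt (abs_nonneg _) h
  have step1 : (∫ y in Ioi (0:ℝ), besselK ν y * (y:ℂ)^(s-1))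
      = ∫ y in Ioi (0:ℝ), ∫ t in Ioi (0:ℝ),
          Complex.exp (-(y:ℂ) * Real.cosh t) * Complex.cosh (ν * t) * (y:ℂ)^(s-1) := by
    refine setIntegral_congr_fun measurableSet_Ioi (fun y hy => ?_)
    rw [besselK, ← MeasureTheory.integral_mul_const]
  have step2 : (∫ y in Ioi (0:ℝ), ∫ t in Ioi (0:ℝ),
          Complex.exp (-(y:ℂ) * Real.cosh t) * Complex.cosh (ν * t) * (y:ℂ)^(s-1))
      = ∫ t in Ioi (0:ℝ), ∫ y in Ioi (0:ℝ),
          Complex.exp (-(y:ℂ) * Real.cosh t) * Complex.cosh (ν * t) * (y:ℂ)^(s-1) :=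
    integral_integral_swap (F_integrable s ν h)
  have step3 : (∫ t in Ioi (0:ℝ), ∫ y in Ioi (0:ℝ),
          Complex.exp (-(y:ℂ) * Real.cosh t) * Complex.cosh (ν * t) * (y:ℂ)^(s-1))
      = Complex.Gamma s * ∫ t in Ioi (0:ℝ), ((Real.cosh t : ℝ):ℂ)^(-s) * Complex.cosh (ν * t) := by
    rw [← MeasureTheory.integral_const_mul]
    refine setIntegral_congr_fun measurableSet_Ioi (fun t ht => ?_)
    have hr : 0 < Real.cosh t := Real.cosh_pos t
    have inner1 : (∫ y in Ioi (0:ℝ),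
        Complex.exp (-(y:ℂ) * Real.cosh t) * Complex.cosh (ν * t) * (y:ℂ)^(s-1))
        = ∫ y in Ioi (0:ℝ),
            Complex.cosh (ν * t) * ((y:ℂ)^(s-1) * Complex.exp (-((Real.cosh t : ℝ) * (y:ℂ)))) := by
      refine setIntegral_congr_fun measurableSet_Ioi (fun y hy => ?_)
      push_cast
      ring_nf
    rw [inner1, MeasureTheory.integral_const_mul]
    have hgamma := Complex.integral_cpow_mul_exp_neg_mul_Ioi (a := s) (r := Real.cosh t) hσ hr
    have inner2 : (∫ y in Ioi (0:ℝ),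
        (y:ℂ)^(s-1) * Complex.exp (-((Real.cosh t : ℝ) * (y:ℂ)))) = (1/(Real.cosh t:ℂ))^s * Complex.Gamma s := by
      rw [← hgamma]
    rw [inner2]
    have harg : ((Real.cosh t : ℝ):ℂ).arg ≠ Real.pi := by
      rw [Complex.arg_ofReal_of_nonneg hr.le]
      exact Real.pi_ne_zero.symm
    have h1r : (1/(Real.cosh t:ℂ))^s = ((Real.cosh t : ℝ):ℂ)^(-s) := by
      rw [one_div, Complex.inv_cpow _ _ harg, ← Complex.cpow_neg]
    rw [h1r]
    ring
  have hu : 0 < ((s+ν)/2).re := by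
    have e : (s+ν)/2 = ((((1:ℝ)/2 : ℝ)):ℂ) * (s+ν) := by push_cast; ring
    rw [e, Complex.re_ofReal_mul, Complex.add_re]
    have := neg_abs_le ν.re
    nlinarith
  have hv : 0 < ((s-ν)/2).re := by
    have e : (s-ν)/2 = ((((1:ℝ)/2 : ℝ)):ℂ) * (s-ν) := by push_cast; ring
    rw [e, Complex.re_ofReal_mul, Complex.sub_re]
    have := le_abs_self ν.re
    nlinarith
  have hΓs : Complex.Gamma s ≠ 0 := by
    apply Complex.Gamma_ne_zero
    intro m hm
    have := congrArg Complex.re hm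
    simp only [Complex.neg_re, Complex.natCast_re] at this
    have hm0 : (0:ℝ) ≤ (m:ℝ) := Nat.cast_nonneg m
    linarith
  have hbeta : Complex.betaIntegral ((s+ν)/2) ((s-ν)/2)
      = Complex.Gamma ((s+ν)/2) * Complex.Gamma ((s-ν)/2) / Complex.Gamma s := by
    have := Complex.Gamma_mul_Gamma_eq_betaIntegral hu hv
    rw [show (s+ν)/2 + (s-ν)/2 = s by ring] at this
    rw [eq_div_iff hΓs]
    linear_combination -this
  have e2 : (2:ℂ)^(s-1) = 2^(s-2) * 2 := by
    rw [show s-1 = (s-2)+1 by ring, Complex.cpow_add _ _ (two_ne_zero), Complex.cpow_one]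
  have step4 : (∫ t in Ioi (0:ℝ), ((Real.cosh t : ℝ):ℂ)^(-s) * Complex.cosh (ν * t))
      = 2^(s-2) * Complex.Gamma ((s+ν)/2) * Complex.Gamma ((s-ν)/2) / Complex.Gamma s := by
    have h2 := halfline s ν h
    rw [subst_integral s ν, hbeta] at h2
    field_simp at h2
    rw [eq_div_iff hΓs]
    simp only [Complex.ofReal_cosh] at h2 ⊢
    linear_combination -h2/2 + (Complex.Gamma ((s+ν)/2) * Complex.Gamma ((s-ν)/2))/2 * e2
  rw [step1, step2, step3, step4]
  field_simp
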